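/- Let v'_1,…,v'_r be unit vectors in a Hilbert space with |⟨v'_i, v'_j⟩| ≤ δ for all i ≠ j, where 0 < δ ≤ 1/(16r). Let v_1,…,v_r be the vectors obtained by Gram–Schmidt orthonormalising v'_1,…,v'_r. Then for every i, ‖v_i − v'_i‖ ≤ δ√(32(i−1)). -/

import Mathlib

open scoped BigOperators

open Finset in
lemma aux_norm_sq_sum {E : Type*} [NormedAddCommGroup E] [InnerProductSpace ℂ E]
    {ι : Type*} (s : Finset ι) (u : ι → E) (c : ι → ℂ)
    (hu : ∀ k ∈ s, ‖u k‖ = 1)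
    (ho : ∀ k ∈ s, ∀ l ∈ s, k ≠ l → (inner ℂ (u k) (u l) : ℂ) = 0) :
    ‖∑ k ∈ s, c k • u k‖ ^ 2 = ∑ k ∈ s, ‖c k‖ ^ 2 := by
  classical
  have h : (inner ℂ (∑ k ∈ s, c k • u k) (∑ k ∈ s, c k • u k) : ℂ)
      = ∑ k ∈ s, ((‖c k‖ : ℂ)) ^ 2 := by
    rw [sum_inner]
    refine Finset.sum_congr rfl fun k hk => ?_
    rw [inner_sum, Finset.sum_eq_single k]
    · rw [inner_smul_left, inner_smul_right, inner_self_eq_norm_sq_to_K, hu k hk,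
        ← mul_assoc, mul_comm (starRingEnd ℂ (c k)) (c k), Complex.mul_conj']
      push_cast
      ring
    · intro l hl hlk
      rw [inner_smul_left, inner_smul_right, ho k hk l hl (Ne.symm hlk)]
      ring
    · intro hk'; exact absurd hk hk'
  have h2 := inner_self_eq_norm_sq_to_K (𝕜 := ℂ) (∑ k ∈ s, c k • u k)
  rw [h2] at h
  have : ((‖∑ k ∈ s, c k • u k‖ ^ 2 : ℝ) : ℂ) = ((∑ k ∈ s, ‖c k‖ ^ 2 : ℝ) : ℂ) := by
    push_cast
    exact h
  exact_mod_cast this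

set_option maxHeartbeats 1000000 in
theorem stmt1 {E : Type*} [NormedAddCommGroup E] [InnerProductSpace ℂ E] [CompleteSpace E]
    (r : ℕ) (v' : Fin r → E) (δ : ℝ) (hδ0 : 0 < δ) (hδ : δ ≤ 1 / (16 * r))
    (hunit : ∀ i, ‖v' i‖ = 1)
    (hinner : ∀ i j, i ≠ j → ‖(inner ℂ (v' i) (v' j) : ℂ)‖ ≤ δ) :
    ∀ i : Fin r,
      ‖(@InnerProductSpace.gramSchmidtNormed ℂ E _ _ _ (Fin r) _ inferInstance
          (inferInstance : WellFoundedLT (Fin r)) v') i - v' i‖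
        ≤ δ * Real.sqrt (32 * (i : ℝ)) := by
  classical
  set u : Fin r → E := @InnerProductSpace.gramSchmidtNormed ℂ E _ _ _ (Fin r) _ inferInstance
      (inferInstance : WellFoundedLT (Fin r)) v' with hudef
  set G : Fin r → E := @InnerProductSpace.gramSchmidt ℂ E _ _ _ (Fin r) _ inferInstance
      (inferInstance : WellFoundedLT (Fin r)) v' with hGdef
  have hun : ∀ k, u k = ((‖G k‖ : ℝ) : ℂ)⁻¹ • G k := by
    intro k
    rw [hudef, hGdef]
    rfl
  have horth : ∀ a b : Fin r, a ≠ b → (inner ℂ (G a) (G b) : ℂ) = 0 := by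
    intro a b h
    have h2 := @InnerProductSpace.gramSchmidt_orthogonal ℂ E _ _ _ (Fin r) _ inferInstance
      (inferInstance : WellFoundedLT (Fin r)) v' a b h
    rw [← hGdef] at h2
    exact h2
  suffices H : ∀ n : ℕ, ∀ i : Fin r, (i : ℕ) ≤ n →
      ‖u i‖ = 1 ∧
      (∀ j, i < j → ‖(inner ℂ (u i) (v' j) : ℂ)‖ ≤ 2 * δ) ∧
      ‖u i - v' i‖ ≤ δ * Real.sqrt (32 * ((i : ℕ) : ℝ)) by
    intro i
    exact (H i i le_rfl).2.2
  intro n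
  induction n using Nat.strongRecOn with
  | ind n IH =>
  intro i hin
  -- basic numeric facts
  have hr1 : (1 : ℝ) ≤ (r : ℝ) := by exact_mod_cast i.pos
  have hir : ((i : ℕ) : ℝ) ≤ (r : ℝ) := by exact_mod_cast (i.2).le
  have hδr : δ * (16 * (r : ℝ)) ≤ 1 := by
    rw [le_div_iff₀ (by positivity)] at hδ
    exact hδ
  -- induction hypothesis for earlier indices
  have hIH : ∀ k : Fin r, k < i →
      ‖u k‖ = 1 ∧ (∀ j, k < j → ‖(inner ℂ (u k) (v' j) : ℂ)‖ ≤ 2 * δ) := by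
    intro k hk
    have h1 : (k : ℕ) < n := lt_of_lt_of_le hk hin
    exact ⟨(IH _ h1 k le_rfl).1, (IH _ h1 k le_rfl).2.1⟩
  set c : Fin r → ℂ := fun k => inner ℂ (u k) (v' i) with hcdef
  set p : E := ∑ k ∈ Finset.Iio i, c k • u k with hpdef
  -- orthogonality facts
  have honn : ∀ k l : Fin r, k ≠ l → (inner ℂ (u k) (u l) : ℂ) = 0 := by
    intro k l hkl
    rw [hun k, hun l, inner_smul_left, inner_smul_right, horth k l hkl]
    ring
  have hgiu : ∀ k : Fin r, k ≠ i → (inner ℂ (G i) (u k) : ℂ) = 0 := by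
    intro k hk
    rw [hun k, inner_smul_right, horth i k (Ne.symm hk), mul_zero]
  -- expression of G i
  have hterm : ∀ k ∈ Finset.Iio i,
      ((ℂ ∙ G k).starProjection (v' i) : E) = c k • u k := by
    intro k hk
    rw [Submodule.starProjection_singleton]
    rw [hcdef]
    simp only [hun k, inner_smul_left, smul_smul, map_inv₀, Complex.conj_ofReal]
    congr 1
    rw [div_eq_mul_inv, sq]
    push_cast
    ring_nf
    norm_cast
  have hvi : v' i = G i + p := by
    have h := @InnerProductSpace.gramSchmidt_def' ℂ E _ _ _ (Fin r) _ inferInstance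
      (inferInstance : WellFoundedLT (Fin r)) v' i
    rw [← hGdef] at h
    rw [Finset.sum_congr rfl hterm] at h
    exact h
  have hgi : G i = v' i - p := eq_sub_of_add_eq hvi.symm
  -- norms via Pythagoras
  set S : ℝ := ∑ k ∈ Finset.Iio i, ‖c k‖ ^ 2 with hSdef
  have hu1 : ∀ k ∈ Finset.Iio i, ‖u k‖ = 1 := fun k hk =>
    (hIH k (Finset.mem_Iio.mp hk)).1
  have hpnorm : ‖p‖ ^ 2 = S :=
    aux_norm_sq_sum _ u c hu1 (fun k _ l _ hkl => honn k l hkl)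
  have hck : ∀ k ∈ Finset.Iio i, ‖c k‖ ≤ 2 * δ := fun k hk =>
    (hIH k (Finset.mem_Iio.mp hk)).2 i (Finset.mem_Iio.mp hk)
  have hcard : (Finset.Iio i).card = (i : ℕ) := by simp
  have hS_le : S ≤ ((i : ℕ) : ℝ) * (4 * δ ^ 2) := by
    calc S ≤ ∑ _k ∈ Finset.Iio i, (2 * δ) ^ 2 := by
          refine Finset.sum_le_sum fun k hk => ?_
          have h1 := hck k hk
          have h2 := norm_nonneg (c k)
          nlinarith
      _ = ((i : ℕ) : ℝ) * (4 * δ ^ 2) := by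
          rw [Finset.sum_const, hcard, nsmul_eq_mul]
          ring
  have hSδ : S ≤ δ / 4 := by nlinarith
  have hS64 : S ≤ 1 / 64 := by nlinarith
  have hip : (inner ℂ (G i) p : ℂ) = 0 := by
    rw [hpdef, inner_sum]
    refine Finset.sum_eq_zero fun k hk => ?_
    rw [inner_smul_right, hgiu k (Finset.mem_Iio.mp hk).ne, mul_zero]
  have hgnormsq : ‖G i‖ ^ 2 = 1 - S := by
    have h1 := norm_add_sq (𝕜 := ℂ) (G i) p
    rw [← hvi, hip, hpnorm, hunit i] at h1
    simp at h1
    linarith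
  have hgle1 : ‖G i‖ ≤ 1 := by nlinarith [norm_nonneg (G i)]
  have hgge : (9 : ℝ) / 10 ≤ ‖G i‖ := by nlinarith [norm_nonneg (G i)]
  have hgpos : 0 < ‖G i‖ := by linarith
  -- part (a)
  have ha : ‖u i‖ = 1 := by
    rw [hun i, norm_smul, norm_inv, Complex.norm_real, Real.norm_eq_abs,
      abs_of_nonneg (norm_nonneg (G i))]
    field_simp
  refine ⟨ha, ?_, ?_⟩
  -- part (b)
  · intro j hij
    have hgj : (inner ℂ (G i) (v' j) : ℂ)
        = inner ℂ (v' i) (v' j) - ∑ k ∈ Finset.Iio i, (inner ℂ (c k • u k) (v' j) : ℂ) := by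
      rw [hgi, inner_sub_left, hpdef, sum_inner]
    have hsum : ‖∑ k ∈ Finset.Iio i, (inner ℂ (c k • u k) (v' j) : ℂ)‖
        ≤ ((i : ℕ) : ℝ) * (4 * δ ^ 2) := by
      calc ‖∑ k ∈ Finset.Iio i, (inner ℂ (c k • u k) (v' j) : ℂ)‖
          ≤ ∑ k ∈ Finset.Iio i, ‖(inner ℂ (c k • u k) (v' j) : ℂ)‖ := norm_sum_le _ _
        _ ≤ ∑ _k ∈ Finset.Iio i, (2 * δ) * (2 * δ) := by
            refine Finset.sum_le_sum fun k hk => ?_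
            rw [inner_smul_left]
            have hk' : k < i := Finset.mem_Iio.mp hk
            have h1 := hck k hk
            have h2 := (hIH k hk').2 j (hk'.trans hij)
            rw [norm_mul, RCLike.norm_conj]
            exact mul_le_mul h1 h2 (norm_nonneg _) (by positivity)
        _ = ((i : ℕ) : ℝ) * (4 * δ ^ 2) := by
            rw [Finset.sum_const, hcard, nsmul_eq_mul]; ring
    have hgjn : ‖(inner ℂ (G i) (v' j) : ℂ)‖ ≤ δ + δ / 4 := by
      rw [hgj]
      have h1 := hinner i j (Fin.ne_of_lt hij)
      have h2 : ((i : ℕ) : ℝ) * (4 * δ ^ 2) ≤ δ / 4 := by nlinarith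
      calc ‖(inner ℂ (v' i) (v' j) : ℂ) - ∑ k ∈ Finset.Iio i, (inner ℂ (c k • u k) (v' j) : ℂ)‖
          ≤ ‖(inner ℂ (v' i) (v' j) : ℂ)‖
            + ‖∑ k ∈ Finset.Iio i, (inner ℂ (c k • u k) (v' j) : ℂ)‖ := norm_sub_le _ _
        _ ≤ δ + δ / 4 := by linarith
    rw [hun i, inner_smul_left, norm_mul, map_inv₀, Complex.conj_ofReal, norm_inv,
      Complex.norm_real, Real.norm_eq_abs, abs_of_nonneg (norm_nonneg (G i))]
    rw [inv_mul_le_iff₀ hgpos]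
    nlinarith
  -- part (c)
  · have hs1 : ‖u i - v' i‖ ≤ ‖u i - G i‖ + ‖G i - v' i‖ := by
      have h : u i - v' i = (u i - G i) + (G i - v' i) := by abel
      rw [h]; exact norm_add_le _ _
    have hgv : ‖G i - v' i‖ = ‖p‖ := by
      rw [hgi]
      simp
    have hug : ‖u i - G i‖ ≤ S := by
      have h1 : u i - G i = (((‖G i‖ : ℝ) : ℂ)⁻¹ - 1) • G i := by
        rw [hun i, sub_smul, one_smul]
      rw [h1, norm_smul]
      have h2 : ‖(((‖G i‖ : ℝ) : ℂ)⁻¹ - 1)‖ * ‖G i‖ = |1 - ‖G i‖| := by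
        have h3 : (((‖G i‖ : ℝ) : ℂ)⁻¹ - 1) = (((‖G i‖⁻¹ - 1 : ℝ)) : ℂ) := by push_cast; ring
        rw [h3, Complex.norm_real, Real.norm_eq_abs, ← abs_of_nonneg (norm_nonneg (G i)),
          ← abs_mul]
        congr 1
        field_simp
        rw [abs_of_nonneg (norm_nonneg (G i))]; ring
      rw [h2, abs_of_nonneg (by linarith)]
      nlinarith [norm_nonneg (G i)]
    set si : ℝ := Real.sqrt ((i : ℕ) : ℝ) with hsidef
    have hsi0 : 0 ≤ si := Real.sqrt_nonneg _
    have hsi2 : si ^ 2 = ((i : ℕ) : ℝ) := Real.sq_sqrt (by positivity)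
    have hsir : si ≤ (r : ℝ) := by
      rw [hsidef]
      calc Real.sqrt ((i : ℕ) : ℝ) ≤ Real.sqrt ((r : ℝ) ^ 2) := by
            apply Real.sqrt_le_sqrt; nlinarith
        _ = (r : ℝ) := Real.sqrt_sq (by positivity)
    have h32 : Real.sqrt (32 * ((i : ℕ) : ℝ)) = Real.sqrt 32 * si := by
      rw [Real.sqrt_mul (by norm_num)]
    have h5 : (5 : ℝ) ≤ Real.sqrt 32 := by
      rw [show (5:ℝ) = Real.sqrt 25 by
        rw [show (25:ℝ) = 5^2 by norm_num, Real.sqrt_sq]; norm_num]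
      exact Real.sqrt_le_sqrt (by norm_num)
    have hpsi : ‖p‖ ≤ 2 * δ * si := by
      have h1 : ‖p‖ = Real.sqrt S := by
        rw [← hpnorm, Real.sqrt_sq (norm_nonneg p)]
      rw [h1]
      calc Real.sqrt S ≤ Real.sqrt (((i : ℕ) : ℝ) * (4 * δ ^ 2)) := Real.sqrt_le_sqrt hS_le
        _ = 2 * δ * si := by
            rw [show ((i : ℕ) : ℝ) * (4 * δ ^ 2) = (2 * δ) ^ 2 * ((i : ℕ) : ℝ) by ring,
              Real.sqrt_mul (by positivity), Real.sqrt_sq (by positivity)]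
    have hds : δ * si ≤ 1 / 16 := by nlinarith
    have hSsi : S ≤ 3 * δ * si := by
      nlinarith [hds, mul_nonneg hδ0.le hsi0, hS_le, hsi2, sq_nonneg (δ * si)]
    calc ‖u i - v' i‖ ≤ ‖u i - G i‖ + ‖G i - v' i‖ := hs1
      _ ≤ S + 2 * δ * si := by rw [hgv]; linarith
      _ ≤ δ * Real.sqrt (32 * ((i : ℕ) : ℝ)) := by rw [h32]; nlinarith
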